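/- arXiv:1710.00494 — 2 statements merged into one kernel-verified Lean document; each statement's English description precedes it below -/
import Mathlib

section
/- (Lidskii–Wielandt inequality, ℓ² form) For n×n real symmetric matrices X and Y, (∑_{i=1}^n (λ_i(X) − λ_i(Y))²)^{1/2} ≤ ‖X − Y‖_F, where λ_1 ≥ ⋯ ≥ λ_n denote eigenvalues in decreasing order counting multiplicities and ‖·‖_F is the Frobenius norm. -/
open Matrix BigOperators

noncomputable section

/-- Loewner order: `A ≤ B` iff `B - A` is positive semidefinite. -/
def loewnerLE {m : ℕ} (A B : Matrix (Fin m) (Fin m) ℝ) : Prop := (B - A).PosSemidef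

/-- `M(B/A) = inf {α > 0 : B ≤ α A}` (Loewner order). -/
noncomputable def Mratio {m : ℕ} (A B : Matrix (Fin m) (Fin m) ℝ) : ℝ :=
  sInf {α : ℝ | 0 < α ∧ loewnerLE B (α • A)}

/-- The Thompson metric `d_T(A,B) = max (log M(B/A)) (log M(A/B))`. -/
noncomputable def thompson {m : ℕ} (A B : Matrix (Fin m) (Fin m) ℝ) : ℝ :=
  max (Real.log (Mratio A B)) (Real.log (Mratio B A))

/-- Eigenvalues of a (Hermitian) matrix arranged in decreasing order, counting
multiplicities; junk value `0` if the matrix is not Hermitian. -/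
noncomputable def sortedEigs {m : ℕ} (A : Matrix (Fin m) (Fin m) ℝ) : Fin m → ℝ :=
  if hA : A.IsHermitian then fun i => hA.eigenvalues (Tuple.sort hA.eigenvalues i.rev)
  else fun _ => 0

/-- Functional calculus: apply `f : ℝ → ℝ` to a symmetric matrix via the spectral
decomposition; junk value `0` if the matrix is not Hermitian. -/
noncomputable def matFun {m : ℕ} (f : ℝ → ℝ) (A : Matrix (Fin m) (Fin m) ℝ) :
    Matrix (Fin m) (Fin m) ℝ :=
  if hA : A.IsHermitian then hA.cfc f else 0

/-- Matrix logarithm via the spectral decomposition. -/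
noncomputable def matLog {m : ℕ} (A : Matrix (Fin m) (Fin m) ℝ) : Matrix (Fin m) (Fin m) ℝ :=
  matFun Real.log A

/-- Matrix exponential via the spectral decomposition. -/
noncomputable def matExp {m : ℕ} (A : Matrix (Fin m) (Fin m) ℝ) : Matrix (Fin m) (Fin m) ℝ :=
  matFun Real.exp A

/-- Positive-definite square root. -/
noncomputable def pdSqrt {m : ℕ} (A : Matrix (Fin m) (Fin m) ℝ) : Matrix (Fin m) (Fin m) ℝ :=
  matFun Real.sqrt A

/-- The inverse square root `A^{-1/2}`. -/
noncomputable def pdInvSqrt {m : ℕ} (A : Matrix (Fin m) (Fin m) ℝ) : Matrix (Fin m) (Fin m) ℝ :=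
  matFun (fun x => (Real.sqrt x)⁻¹) A

/-- The real power `A^r` of a positive definite matrix via the spectral decomposition. -/
noncomputable def matPow {m : ℕ} (r : ℝ) (A : Matrix (Fin m) (Fin m) ℝ) :
    Matrix (Fin m) (Fin m) ℝ :=
  matFun (fun x => x ^ r) A

/-- Frobenius norm `(tr X²)^{1/2}` of a real symmetric matrix. -/
noncomputable def frob {m : ℕ} (X : Matrix (Fin m) (Fin m) ℝ) : ℝ :=
  Real.sqrt ((X * X).trace)

/-- Riemannian trace distance `δ(A,B) = ‖log (A^{-1/2} B A^{-1/2})‖_F`. -/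
noncomputable def riemDist {m : ℕ} (A B : Matrix (Fin m) (Fin m) ℝ) : ℝ :=
  frob (matLog (pdInvSqrt A * B * pdInvSqrt A))

/-- The standard symplectic form matrix `J = [[0, I], [-I, 0]]` of size `(n+n) × (n+n)`. -/
noncomputable def Jmat (n : ℕ) : Matrix (Fin (n + n)) (Fin (n + n)) ℝ :=
  Matrix.reindex finSumFinEquiv finSumFinEquiv (Matrix.fromBlocks 0 1 (-1) 0)

/-- The matrix `A^{1/2} Jᵀ A J A^{1/2}`, whose eigenvalues are the squares of the
(extended) symplectic eigenvalues of `A`. -/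
noncomputable def sympProd {n : ℕ} (A : Matrix (Fin (n + n)) (Fin (n + n)) ℝ) :
    Matrix (Fin (n + n)) (Fin (n + n)) ℝ :=
  pdSqrt A * (Jmat n)ᵀ * A * Jmat n * pdSqrt A

/-- The `t`-weighted geometric mean `A #_t B = A^{1/2} (A^{-1/2} B A^{-1/2})^t A^{1/2}`. -/
noncomputable def gmean {m : ℕ} (t : ℝ) (A B : Matrix (Fin m) (Fin m) ℝ) :
    Matrix (Fin m) (Fin m) ℝ :=
  pdSqrt A * matPow t (pdInvSqrt A * B * pdInvSqrt A) * pdSqrt A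

section LidskiiAux
open Finset

lemma sortedEigs_eq {m : ℕ} {A : Matrix (Fin m) (Fin m) ℝ} (hA : A.IsHermitian) :
    sortedEigs A = hA.eigenvalues ∘ (Fin.revPerm.trans (Tuple.sort hA.eigenvalues)) := by
  rw [sortedEigs, dif_pos hA]; rfl

lemma sortedEigs_antitone {m : ℕ} {A : Matrix (Fin m) (Fin m) ℝ} (hA : A.IsHermitian) :
    Antitone (sortedEigs A) := by
  intro i j hij
  rw [sortedEigs_eq hA]
  exact Tuple.monotone_sort hA.eigenvalues (Fin.rev_le_rev.2 hij)

lemma ds_bound {n : ℕ} (s : Matrix (Fin n) (Fin n) ℝ) (hs : s ∈ doublyStochastic ℝ (Fin n))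
    (a b : Fin n → ℝ) (hab : Monovary a b) :
    ∑ k, ∑ l, a k * b l * s k l ≤ ∑ i, a i * b i := by
  classical
  let f : Matrix (Fin n) (Fin n) ℝ →ₗ[ℝ] ℝ :=
    { toFun := fun M => ∑ k, ∑ l, a k * b l * M k l
      map_add' := by intro M N; simp [mul_add, Finset.sum_add_distrib]
      map_smul' := by
        intro c M; simp [Finset.mul_sum, smul_eq_mul, mul_comm, mul_left_comm] }
  have hconv : ConvexOn ℝ Set.univ f := f.convexOn convex_univ
  have hmem : s ∈ convexHull ℝ {σ.permMatrix ℝ | σ : Equiv.Perm (Fin n)} := by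
    rwa [← doublyStochastic_eq_convexHull_permMatrix]
  obtain ⟨P, ⟨σ, rfl⟩, hP⟩ := hconv.exists_ge_of_mem_convexHull (by simp) hmem
  calc ∑ k, ∑ l, a k * b l * s k l = f s := rfl
    _ ≤ f (σ.permMatrix ℝ) := hP
    _ = ∑ k, a k * b (σ k) := by
        simp only [f, LinearMap.coe_mk, AddHom.coe_mk, Equiv.Perm.permMatrix,
          PEquiv.toMatrix_apply, Equiv.toPEquiv_apply, Option.mem_def]
        refine Finset.sum_congr rfl fun k _ => ?_
        rw [Finset.sum_eq_single (σ k)] <;> simp +contextual [eq_comm]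
    _ ≤ ∑ i, a i * b i := hab.sum_mul_comp_perm_le_sum_mul

lemma trace_conj {n : ℕ} (d e : Fin n → ℝ) (W : Matrix (Fin n) (Fin n) ℝ) :
    (diagonal d * W * diagonal e * Wᴴ).trace = ∑ k, ∑ l, d k * e l * (W k l)^2 := by
  simp only [trace, diag_apply, mul_apply, conjTranspose_apply, star_trivial, diagonal_apply,
    ite_mul, zero_mul, mul_ite, mul_zero, Finset.sum_ite_eq, Finset.sum_ite_eq',
    Finset.mem_univ, if_true, Finset.sum_mul, Finset.mul_sum]
  refine Finset.sum_congr rfl fun k _ => Finset.sum_congr rfl fun l _ => ?_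
  ring

lemma trace_formula {n : ℕ} (X Y : Matrix (Fin n) (Fin n) ℝ)
    (hX : X.IsHermitian) (hY : Y.IsHermitian) :
    (X * Y).trace = ∑ k, ∑ l, hX.eigenvalues k * hY.eigenvalues l *
      (((hX.eigenvectorUnitary : Matrix (Fin n) (Fin n) ℝ)ᴴ
        * (hY.eigenvectorUnitary : Matrix (Fin n) (Fin n) ℝ)) k l)^2 := by
  set U : Matrix (Fin n) (Fin n) ℝ := ↑hX.eigenvectorUnitary with hUdef
  set V : Matrix (Fin n) (Fin n) ℝ := ↑hY.eigenvectorUnitary with hVdef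
  have hXd : X = U * diagonal hX.eigenvalues * Uᴴ := by
    simpa [Matrix.star_eq_conjTranspose] using hX.spectral_theorem
  have hYd : Y = V * diagonal hY.eigenvalues * Vᴴ := by
    simpa [Matrix.star_eq_conjTranspose] using hY.spectral_theorem
  rw [← trace_conj hX.eigenvalues hY.eigenvalues (Uᴴ * V)]
  conv_lhs => rw [hXd, hYd]
  rw [show (U * diagonal hX.eigenvalues * Uᴴ) * (V * diagonal hY.eigenvalues * Vᴴ)
      = U * (diagonal hX.eigenvalues * Uᴴ * V * diagonal hY.eigenvalues * Vᴴ) by noncomm_ring,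
    trace_mul_comm,
    show (diagonal hX.eigenvalues * Uᴴ * V * diagonal hY.eigenvalues * Vᴴ) * U
      = diagonal hX.eigenvalues * (Uᴴ * V) * diagonal hY.eigenvalues * (Uᴴ * V)ᴴ by
        rw [conjTranspose_mul, conjTranspose_conjTranspose]; noncomm_ring]

lemma sq_mem_ds {n : ℕ} (W : Matrix (Fin n) (Fin n) ℝ) (h1 : Wᴴ * W = 1) (h2 : W * Wᴴ = 1) :
    (Matrix.of fun k l => (W k l)^2) ∈ doublyStochastic ℝ (Fin n) := by
  rw [mem_doublyStochastic_iff_sum]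
  refine ⟨fun i j => sq_nonneg _, fun k => ?_, fun l => ?_⟩
  · have := congrFun (congrFun h2 k) k
    simp only [mul_apply, conjTranspose_apply, star_trivial, one_apply_eq] at this
    simpa [sq] using this
  · have := congrFun (congrFun h1 l) l
    simp only [mul_apply, conjTranspose_apply, star_trivial, one_apply_eq] at this
    simpa [sq, mul_comm] using this

lemma trace_mul_le {n : ℕ} (X Y : Matrix (Fin n) (Fin n) ℝ)
    (hX : X.IsHermitian) (hY : Y.IsHermitian) :
    (X * Y).trace ≤ ∑ i, sortedEigs X i * sortedEigs Y i := by
  classical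
  set U : Matrix (Fin n) (Fin n) ℝ := ↑hX.eigenvectorUnitary with hUdef
  set V : Matrix (Fin n) (Fin n) ℝ := ↑hY.eigenvectorUnitary with hVdef
  set d := hX.eigenvalues with hd
  set e := hY.eigenvalues with he
  have hUU : U * Uᴴ = 1 := Matrix.mem_unitaryGroup_iff.mp hX.eigenvectorUnitary.2
  have hVV : Vᴴ * V = 1 := Matrix.mem_unitaryGroup_iff'.mp hY.eigenvectorUnitary.2
  have hVV' : V * Vᴴ = 1 := Matrix.mem_unitaryGroup_iff.mp hY.eigenvectorUnitary.2
  have hUU' : Uᴴ * U = 1 := Matrix.mem_unitaryGroup_iff'.mp hX.eigenvectorUnitary.2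
  set W : Matrix (Fin n) (Fin n) ℝ := Uᴴ * V with hWdef
  have hW1 : Wᴴ * W = 1 := by
    rw [hWdef, conjTranspose_mul, conjTranspose_conjTranspose, mul_assoc, ← mul_assoc U, hUU,
      one_mul, hVV]
  have hW2 : W * Wᴴ = 1 := by
    rw [hWdef, conjTranspose_mul, conjTranspose_conjTranspose, mul_assoc, ← mul_assoc V, hVV',
      one_mul, hUU']
  set s : Matrix (Fin n) (Fin n) ℝ := Matrix.of (fun k l => (W k l)^2) with hsdef
  have hs : s ∈ doublyStochastic ℝ (Fin n) := sq_mem_ds W hW1 hW2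
  set π : Equiv.Perm (Fin n) := Fin.revPerm.trans (Tuple.sort d) with hπ
  set ρ : Equiv.Perm (Fin n) := Fin.revPerm.trans (Tuple.sort e) with hρ
  set a := sortedEigs X with ha
  set b := sortedEigs Y with hb
  have haeq : a = d ∘ π := sortedEigs_eq hX
  have hbeq : b = e ∘ ρ := sortedEigs_eq hY
  set s' : Matrix (Fin n) (Fin n) ℝ := Matrix.of (fun k l => s (π k) (ρ l)) with hs'def
  have hs' : s' ∈ doublyStochastic ℝ (Fin n) := by
    rw [mem_doublyStochastic_iff_sum]
    refine ⟨fun i j => hs.1 _ _, fun k => ?_, fun l => ?_⟩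
    · rw [show ∑ l, s' k l = ∑ l, s (π k) (ρ l) from rfl, Equiv.sum_comp ρ (fun l => s (π k) l)]
      exact sum_row_of_mem_doublyStochastic hs _
    · rw [show ∑ k, s' k l = ∑ k, s (π k) (ρ l) from rfl, Equiv.sum_comp π (fun k => s k (ρ l))]
      exact sum_col_of_mem_doublyStochastic hs _
  have hmono : Monovary a b := by
    intro i j hb'
    rcases le_or_gt i j with h | h
    · exact absurd (sortedEigs_antitone hY h) (not_le.2 hb')
    · exact sortedEigs_antitone hX h.le
  have key : (X * Y).trace = ∑ k, ∑ l, a k * b l * s' k l := by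
    rw [trace_formula X Y hX hY]
    rw [← Equiv.sum_comp π (fun k => ∑ l, d k * e l * (W k l)^2)]
    refine Finset.sum_congr rfl fun k _ => ?_
    rw [← Equiv.sum_comp ρ (fun l => d (π k) * e l * (W (π k) l)^2)]
    refine Finset.sum_congr rfl fun l _ => ?_
    rw [haeq, hbeq]
    rfl
  rw [key]
  exact ds_bound s' hs' a b hmono

lemma trace_sq {n : ℕ} (X : Matrix (Fin n) (Fin n) ℝ) (hX : X.IsHermitian) :
    (X * X).trace = ∑ i, sortedEigs X i ^ 2 := by
  classical
  have hUU' : (hX.eigenvectorUnitary : Matrix (Fin n) (Fin n) ℝ)ᴴ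
      * (hX.eigenvectorUnitary : Matrix (Fin n) (Fin n) ℝ) = 1 :=
    Matrix.mem_unitaryGroup_iff'.mp hX.eigenvectorUnitary.2
  rw [trace_formula X X hX hX, hUU']
  have : ∀ k, ∑ l, hX.eigenvalues k * hX.eigenvalues l * ((1 : Matrix (Fin n) (Fin n) ℝ) k l)^2
      = hX.eigenvalues k ^ 2 := by
    intro k
    rw [Finset.sum_eq_single k]
    · simp [sq]
    · intro l _ hl; simp [one_apply, Ne.symm hl]
    · simp
  rw [Finset.sum_congr rfl fun k _ => this k]
  rw [sortedEigs_eq hX]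
  exact (Equiv.sum_comp (Fin.revPerm.trans (Tuple.sort hX.eigenvalues))
    (fun k => hX.eigenvalues k ^ 2)).symm

end LidskiiAux

/-- Lidskii–Wielandt, ℓ² form:
`(∑ i (λ_i(X) − λ_i(Y))²)^{1/2} ≤ ‖X − Y‖_F` for real symmetric `X, Y`. -/
theorem lidskii_wielandt_l2
    (n : ℕ) (X Y : Matrix (Fin n) (Fin n) ℝ)
    (hX : X.IsHermitian) (hY : Y.IsHermitian) :
    Real.sqrt (∑ i : Fin n, (sortedEigs X i - sortedEigs Y i) ^ 2) ≤ frob (X - Y) := by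
  rw [frob]
  apply Real.sqrt_le_sqrt
  have h1 : (X * X).trace = ∑ i, sortedEigs X i ^ 2 := trace_sq X hX
  have h2 : (Y * Y).trace = ∑ i, sortedEigs Y i ^ 2 := trace_sq Y hY
  have h3 : (X * Y).trace ≤ ∑ i, sortedEigs X i * sortedEigs Y i := trace_mul_le X Y hX hY
  have hexp : (X - Y) * (X - Y) = X * X - X * Y - Y * X + Y * Y := by noncomm_ring
  have htr : ((X - Y) * (X - Y)).trace
      = (X * X).trace - 2 * (X * Y).trace + (Y * Y).trace := by
    rw [hexp, Matrix.trace_add, Matrix.trace_sub, Matrix.trace_sub,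
      Matrix.trace_mul_comm Y X]
    ring
  have hsum : ∑ i : Fin n, (sortedEigs X i - sortedEigs Y i) ^ 2
      = (∑ i, sortedEigs X i ^ 2) + (∑ i, sortedEigs Y i ^ 2)
        - 2 * ∑ i, sortedEigs X i * sortedEigs Y i := by
    have e1 : ∑ i : Fin n, (sortedEigs X i - sortedEigs Y i) ^ 2
        = ∑ i : Fin n, (sortedEigs X i ^ 2 + sortedEigs Y i ^ 2)
          - ∑ i : Fin n, 2 * (sortedEigs X i * sortedEigs Y i) := by
      rw [← Finset.sum_sub_distrib]
      exact Finset.sum_congr rfl fun i _ => by ring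
    rw [e1, Finset.sum_add_distrib, ← Finset.mul_sum]
  rw [hsum, htr, h1, h2]
  linarith
end
end

section
/- The extended symplectic eigenvalue map is monotone: for A, B ∈ P_{2n} with A ≤ B in the Loewner order, λ_i(A^{1/2} Jᵀ A J A^{1/2}) ≤ λ_i(B^{1/2} Jᵀ B J B^{1/2}) for every i = 1, …, 2n, where λ_1 ≥ ⋯ ≥ λ_{2n} denote eigenvalues in decreasing order. -/
open Matrix BigOperators

noncomputable section

section AuxLemmas
open Polynomial Finset


theorem charpoly_conj_aux {m : ℕ} (S M : Matrix (Fin m) (Fin m) ℝ) (hS : IsUnit S.det) :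
    (S * M * S⁻¹).charpoly = M.charpoly := by
  have hinv : S * S⁻¹ = 1 := mul_nonsing_inv S hS
  have key : charmatrix (S * M * S⁻¹) =
      (C : ℝ →+* ℝ[X]).mapMatrix S * charmatrix M * (C : ℝ →+* ℝ[X]).mapMatrix S⁻¹ := by
    unfold charmatrix
    rw [mul_sub, sub_mul]
    congr 1
    · rw [mul_assoc, scalar_commute (X : ℝ[X]) (fun r => Commute.all _ _) _, ← mul_assoc,
        ← _root_.map_mul ((C : ℝ →+* ℝ[X]).mapMatrix), hinv, _root_.map_one, one_mul]
    · rw [← _root_.map_mul ((C : ℝ →+* ℝ[X]).mapMatrix),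
        ← _root_.map_mul ((C : ℝ →+* ℝ[X]).mapMatrix)]
  have hdet : ((C : ℝ →+* ℝ[X]).mapMatrix S).det * ((C : ℝ →+* ℝ[X]).mapMatrix S⁻¹).det = 1 := by
    rw [← det_mul, ← _root_.map_mul ((C : ℝ →+* ℝ[X]).mapMatrix), hinv, _root_.map_one, det_one]
  calc (S * M * S⁻¹).charpoly
      = ((C : ℝ →+* ℝ[X]).mapMatrix S).det * M.charpoly * ((C : ℝ →+* ℝ[X]).mapMatrix S⁻¹).det := by
        rw [Matrix.charpoly, key, det_mul, det_mul, Matrix.charpoly]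
    _ = M.charpoly := by rw [mul_comm _ ((C : ℝ →+* ℝ[X]).mapMatrix S⁻¹).det, ← mul_assoc, mul_comm ((C : ℝ →+* ℝ[X]).mapMatrix S⁻¹).det, hdet, one_mul]

theorem charpoly_mul_comm' {m : ℕ} (P Q : Matrix (Fin m) (Fin m) ℝ) (hP : IsUnit P.det) :
    (P * Q).charpoly = (Q * P).charpoly := by
  have := charpoly_conj_aux P (Q * P) hP
  rw [← this, ← mul_assoc, mul_assoc (P * Q), mul_nonsing_inv P hP, mul_one]



theorem charpoly_hermitian {m : ℕ} (M : Matrix (Fin m) (Fin m) ℝ) (hM : M.IsHermitian) :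
    M.charpoly = ∏ i, (X - C (hM.eigenvalues i)) := by
  have hU2 : (hM.eigenvectorUnitary : Matrix (Fin m) (Fin m) ℝ) *
      star (hM.eigenvectorUnitary : Matrix (Fin m) (Fin m) ℝ) = 1 :=
    (Unitary.mem_iff.mp hM.eigenvectorUnitary.2).2
  have hU1 : star (hM.eigenvectorUnitary : Matrix (Fin m) (Fin m) ℝ) *
      (hM.eigenvectorUnitary : Matrix (Fin m) (Fin m) ℝ) = 1 :=
    (Unitary.mem_iff.mp hM.eigenvectorUnitary.2).1
  have hinv : ((hM.eigenvectorUnitary : Matrix (Fin m) (Fin m) ℝ))⁻¹ =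
      star (hM.eigenvectorUnitary : Matrix (Fin m) (Fin m) ℝ) :=
    inv_eq_right_inv hU2
  have hdet : IsUnit (hM.eigenvectorUnitary : Matrix (Fin m) (Fin m) ℝ).det := by
    apply IsUnit.of_mul_eq_one (star (hM.eigenvectorUnitary : Matrix (Fin m) (Fin m) ℝ)).det
    rw [← det_mul, hU2, det_one]
  have hspec := hM.spectral_theorem
  calc M.charpoly
      = ((hM.eigenvectorUnitary : Matrix (Fin m) (Fin m) ℝ) *
          diagonal (RCLike.ofReal ∘ hM.eigenvalues) *
          ((hM.eigenvectorUnitary : Matrix (Fin m) (Fin m) ℝ))⁻¹).charpoly := by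
        rw [hinv, ← Unitary.conjStarAlgAut_apply (S := ℝ), ← hspec]
    _ = (diagonal (RCLike.ofReal ∘ hM.eigenvalues) : Matrix (Fin m) (Fin m) ℝ).charpoly :=
        charpoly_conj_aux _ _ hdet
    _ = ∏ i, (X - C (hM.eigenvalues i)) := by
        rw [charpoly_of_upperTriangular _ (blockTriangular_diagonal _)]
        simp

theorem eig_multiset_of_charpoly {m : ℕ} {M N : Matrix (Fin m) (Fin m) ℝ}
    (hM : M.IsHermitian) (hN : N.IsHermitian) (h : M.charpoly = N.charpoly) :
    Multiset.map hM.eigenvalues Finset.univ.val = Multiset.map hN.eigenvalues Finset.univ.val := by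
  have hM' := charpoly_hermitian M hM
  have hN' := charpoly_hermitian N hN
  have key : ∀ (f : Fin m → ℝ), (∏ i, (X - C (f i))).roots = Multiset.map f Finset.univ.val := by
    intro f
    rw [Finset.prod_eq_multiset_prod]
    have : Multiset.map (fun i => X - C (f i)) Finset.univ.val
        = Multiset.map (fun a => X - C a) (Multiset.map f Finset.univ.val) := by
      rw [Multiset.map_map]; rfl
    rw [this, roots_multiset_prod_X_sub_C]
  have := congrArg Polynomial.roots (hM' ▸ hN' ▸ h)
  rwa [key, key] at this

theorem sorted_tuple_eq_of_multiset {m : ℕ} {f g : Fin m → ℝ}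
    (h : Multiset.map f Finset.univ.val = Multiset.map g Finset.univ.val) :
    f ∘ Tuple.sort f = g ∘ Tuple.sort g := by
  have h1 : ∀ (f : Fin m → ℝ),
      ((List.ofFn (f ∘ Tuple.sort f)) : Multiset ℝ) = Multiset.map f Finset.univ.val := by
    intro f
    rw [← Fin.univ_val_map, ← Multiset.map_map f (Tuple.sort f), Multiset.map_univ_val_equiv]
  have hperm : (List.ofFn (f ∘ Tuple.sort f)).Perm (List.ofFn (g ∘ Tuple.sort g)) := by
    rw [← Multiset.coe_eq_coe]
    change ((List.ofFn (f ∘ Tuple.sort f)) : Multiset ℝ) = ((List.ofFn (g ∘ Tuple.sort g)) : Multiset ℝ)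
    rw [h1, h1, h]
  have heq := List.Perm.eq_of_sortedLE
    ((Tuple.monotone_sort f).sortedLE_ofFn) ((Tuple.monotone_sort g).sortedLE_ofFn) hperm
  exact List.ofFn_injective heq



theorem weyl_mono {m : ℕ} {M N : Matrix (Fin m) (Fin m) ℝ}
    (hM : M.IsHermitian) (hN : N.IsHermitian) (h : (N - M).PosSemidef) (i : Fin m) :
    hM.eigenvalues (Tuple.sort hM.eigenvalues i.rev) ≤
      hN.eigenvalues (Tuple.sort hN.eigenvalues i.rev) := by
  classical
  set E := EuclideanSpace ℝ (Fin m)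
  -- quadratic form identity
  have quad : ∀ (P : Matrix (Fin m) (Fin m) ℝ) (hP : P.IsHermitian) (x : E),
      (inner ℝ x (toEuclideanLin P x) : ℝ) =
        ∑ k, hP.eigenvalues k * (inner ℝ (hP.eigenvectorBasis k) x : ℝ) ^ 2 := by
    intro P hP x
    rw [← OrthonormalBasis.sum_inner_mul_inner hP.eigenvectorBasis x (toEuclideanLin P x)]
    refine Finset.sum_congr rfl fun k _ => ?_
    have hb : (toEuclideanLin P) (hP.eigenvectorBasis k)
        = hP.eigenvalues k • (hP.eigenvectorBasis k) := by
      apply (WithLp.equiv 2 (Fin m → ℝ)).injective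
      simpa [toEuclideanLin_apply] using hP.mulVec_eigenvectorBasis k
    have hsymm := (Matrix.isHermitian_iff_isSymmetric.mp hP)
    rw [← hsymm (hP.eigenvectorBasis k) x, hb, real_inner_smul_left,
      real_inner_comm x (hP.eigenvectorBasis k)]
    ring
  -- Parseval
  have pars : ∀ (b : OrthonormalBasis (Fin m) ℝ E) (x : E),
      (inner ℝ x x : ℝ) = ∑ k, (inner ℝ (b k) x : ℝ) ^ 2 := by
    intro b x
    rw [← OrthonormalBasis.sum_inner_mul_inner b x x]
    refine Finset.sum_congr rfl fun k _ => ?_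
    rw [real_inner_comm x (b k)]; ring
  -- coefficient vanishing on spans
  have vanish : ∀ (s : Set E) (u : E) (x : E), (∀ y ∈ s, (inner ℝ u y : ℝ) = 0) →
      x ∈ Submodule.span ℝ s → (inner ℝ u x : ℝ) = 0 := by
    intro s u x hs hx
    induction hx using Submodule.span_induction with
    | mem y hy => exact hs y hy
    | zero => simp
    | add y z _ _ hy hz => rw [inner_add_right, hy, hz, add_zero]
    | smul c y _ hy => rw [inner_smul_right, hy, mul_zero]
  set f := hM.eigenvalues with hf
  set g := hN.eigenvalues with hg
  set σ := Tuple.sort f with hσ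
  set τ := Tuple.sort g with hτ
  set vM := hM.eigenvectorBasis with hvM
  set vN := hN.eigenvectorBasis with hvN
  -- the two subspaces
  set wM : {j : Fin m // j ∈ Iic i} → E := fun j => vM (σ (Fin.rev j.1)) with hwM
  set wN : {j : Fin m // j ∈ Ici i} → E := fun j => vN (τ (Fin.rev j.1)) with hwN
  have hwMinj : Function.Injective (fun j : {j : Fin m // j ∈ Iic i} => σ (Fin.rev j.1)) :=
    fun a b hab => Subtype.ext (Fin.rev_injective (σ.injective hab))
  have hwNinj : Function.Injective (fun j : {j : Fin m // j ∈ Ici i} => τ (Fin.rev j.1)) :=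
    fun a b hab => Subtype.ext (Fin.rev_injective (τ.injective hab))
  have hwMon : Orthonormal ℝ wM := vM.orthonormal.comp _ hwMinj
  have hwNon : Orthonormal ℝ wN := vN.orthonormal.comp _ hwNinj
  set VM := Submodule.span ℝ (Set.range wM) with hVM
  set WN := Submodule.span ℝ (Set.range wN) with hWN
  have hVMrank : Module.finrank ℝ VM = (Iic i).card := by
    rw [hVM, finrank_span_eq_card hwMon.linearIndependent, Fintype.card_coe]
  have hWNrank : Module.finrank ℝ WN = (Ici i).card := by
    rw [hWN, finrank_span_eq_card hwNon.linearIndependent, Fintype.card_coe]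
  -- there is a nonzero vector in the intersection
  have hEdim : Module.finrank ℝ E = m := finrank_euclideanSpace_fin
  have hpos : 0 < Module.finrank ℝ ↥(VM ⊓ WN) := by
    have hsum := Submodule.finrank_sup_add_finrank_inf_eq VM WN
    have hle := Submodule.finrank_le (VM ⊔ WN)
    rw [hEdim] at hle
    rw [hVMrank, hWNrank, Fin.card_Iic, Fin.card_Ici] at hsum
    have him : (i : ℕ) < m := i.isLt
    omega
  obtain ⟨x, hxmem, hx0⟩ : ∃ x ∈ VM ⊓ WN, x ≠ 0 := by
    rw [← Submodule.ne_bot_iff]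
    intro hbot
    rw [hbot] at hpos
    simp at hpos
  have hxVM : x ∈ VM := hxmem.1
  have hxWN : x ∈ WN := hxmem.2
  -- lower bound for the M-form
  set a := f (σ i.rev) with ha
  set b := g (τ i.rev) with hb
  have hMbound : a * (inner ℝ x x : ℝ) ≤ (inner ℝ x (toEuclideanLin M x) : ℝ) := by
    rw [quad M hM x, pars vM x, Finset.mul_sum]
    refine Finset.sum_le_sum fun k _ => ?_
    by_cases hk : ∃ j : Fin m, j ≤ i ∧ σ (Fin.rev j) = k
    · obtain ⟨j, hji, hjk⟩ := hk
      have : a ≤ f k := by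
        rw [ha, ← hjk]
        exact Tuple.monotone_sort f (Fin.rev_le_rev.mpr hji)
      exact mul_le_mul_of_nonneg_right this (sq_nonneg _)
    · have : (inner ℝ (vM k) x : ℝ) = 0 := by
        refine vanish _ _ _ ?_ hxVM
        rintro y ⟨j, rfl⟩
        refine vM.orthonormal.2 ?_
        intro hkj
        exact hk ⟨j.1, Finset.mem_Iic.mp j.2, hkj.symm⟩
      rw [this]
      simp
  -- upper bound for the N-form
  have hNbound : (inner ℝ x (toEuclideanLin N x) : ℝ) ≤ b * (inner ℝ x x : ℝ) := by
    rw [quad N hN x, pars vN x, Finset.mul_sum]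
    refine Finset.sum_le_sum fun k _ => ?_
    by_cases hk : ∃ j : Fin m, i ≤ j ∧ τ (Fin.rev j) = k
    · obtain ⟨j, hji, hjk⟩ := hk
      have : g k ≤ b := by
        rw [hb, ← hjk]
        exact Tuple.monotone_sort g (Fin.rev_le_rev.mpr hji)
      exact mul_le_mul_of_nonneg_right this (sq_nonneg _)
    · have : (inner ℝ (vN k) x : ℝ) = 0 := by
        refine vanish _ _ _ ?_ hxWN
        rintro y ⟨j, rfl⟩
        refine vN.orthonormal.2 ?_
        intro hkj
        exact hk ⟨j.1, Finset.mem_Ici.mp j.2, hkj.symm⟩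
      rw [this]
      simp
  -- positivity of the difference
  have hMN : (inner ℝ x (toEuclideanLin M x) : ℝ) ≤ (inner ℝ x (toEuclideanLin N x) : ℝ) := by
    have hdot := (posSemidef_iff_dotProduct_mulVec.mp h).2 ((WithLp.equiv 2 (Fin m → ℝ)) x)
    have heq : (inner ℝ x (toEuclideanLin (N - M) x) : ℝ) =
        dotProduct (star ((WithLp.equiv 2 (Fin m → ℝ)) x))
          ((N - M) *ᵥ ((WithLp.equiv 2 (Fin m → ℝ)) x)) := by
      rw [toEuclideanLin_apply]
      simp only [PiLp.inner_apply, RCLike.inner_apply, starRingEnd_apply, star_trivial,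
        dotProduct, Pi.star_apply]
      rw [EuclideanSpace.inner_eq_star_dotProduct]; simp [dotProduct, mul_comm]
    have h0 : (0:ℝ) ≤ inner ℝ x (toEuclideanLin (N - M) x) := by rw [heq]; exact hdot
    have hlin : toEuclideanLin (N - M) x
        = toEuclideanLin N x - toEuclideanLin M x := by
      rw [map_sub, LinearMap.sub_apply]
    rw [hlin, inner_sub_right] at h0
    linarith
  -- conclude
  have hxx : (0:ℝ) < inner ℝ x x :=
    lt_of_le_of_ne real_inner_self_nonneg (Ne.symm (mt inner_self_eq_zero.mp hx0))
  have : a * (inner ℝ x x : ℝ) ≤ b * (inner ℝ x x : ℝ) := by linarith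
  exact (mul_le_mul_iff_of_pos_right hxx).mp this

theorem pdSqrt_eq {m : ℕ} {A : Matrix (Fin m) (Fin m) ℝ} (hA : A.PosSemidef) :
    pdSqrt A = cfc Real.sqrt A := by
  rw [pdSqrt, matFun, dif_pos hA.1, hA.1.cfc_eq]

theorem pdSqrt_hermitian {m : ℕ} {A : Matrix (Fin m) (Fin m) ℝ} (hA : A.PosSemidef) :
    (pdSqrt A).IsHermitian := by
  rw [pdSqrt_eq hA]; exact (cfc_predicate Real.sqrt A : IsSelfAdjoint _)

theorem pdSqrt_mul_self {m : ℕ} {A : Matrix (Fin m) (Fin m) ℝ} (hA : A.PosSemidef) :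
    pdSqrt A * pdSqrt A = A := by
  rw [pdSqrt_eq hA, ← cfc_mul Real.sqrt Real.sqrt A]
  conv_rhs => rw [← cfc_id' ℝ A hA.1]
  refine cfc_congr fun x hx => ?_
  have hx0 : 0 ≤ x := by
    rw [hA.1.spectrum_real_eq_range_eigenvalues] at hx
    obtain ⟨j, rfl⟩ := hx
    exact hA.eigenvalues_nonneg j
  exact Real.mul_self_sqrt hx0

theorem pdSqrt_det_isUnit {m : ℕ} {A : Matrix (Fin m) (Fin m) ℝ} (hA : A.PosDef) :
    IsUnit (pdSqrt A).det := by
  have h : (pdSqrt A).det * (pdSqrt A).det = A.det := by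
    rw [← det_mul, pdSqrt_mul_self hA.posSemidef]
  have := hA.det_pos
  refine isUnit_iff_ne_zero.mpr fun h0 => ?_
  rw [h0, mul_zero] at h
  exact (ne_of_gt this) h.symm

theorem Jmat_transpose_mul_self (n : ℕ) : (Jmat n)ᵀ * Jmat n = 1 := by
  rw [Jmat]
  rw [Matrix.transpose_reindex]
  simp only [Matrix.reindex_apply]
  rw [Matrix.submatrix_mul_equiv]
  rw [Matrix.fromBlocks_transpose, Matrix.fromBlocks_multiply]
  simp [Matrix.fromBlocks_one]

theorem posDef_conj_J {n : ℕ} {B : Matrix (Fin (n + n)) (Fin (n + n)) ℝ} (hB : B.PosDef) :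
    ((Jmat n)ᵀ * B * Jmat n).PosDef := by
  rw [posDef_iff_dotProduct_mulVec]
  constructor
  · have := isHermitian_conjTranspose_mul_mul (Jmat n) hB.1
    simpa [Matrix.conjTranspose_eq_transpose_of_trivial] using this
  · intro x hx
    have hJx : Jmat n *ᵥ x ≠ 0 := by
      intro h0
      apply hx
      have : (Jmat n)ᵀ *ᵥ (Jmat n *ᵥ x) = x := by
        rw [mulVec_mulVec, Jmat_transpose_mul_self, one_mulVec]
      rw [h0, mulVec_zero] at this
      exact this.symm
    have htr : (Jmat n)ᵀ = (Jmat n)ᴴ := (Matrix.conjTranspose_eq_transpose_of_trivial _).symm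
    rw [htr]
    simpa only [star_mulVec, dotProduct_mulVec, vecMul_vecMul] using (posDef_iff_dotProduct_mulVec.mp hB).2 hJx


theorem sortedEigs_eq_of_charpoly {m : ℕ} {M N : Matrix (Fin m) (Fin m) ℝ}
    (hM : M.IsHermitian) (hN : N.IsHermitian) (h : M.charpoly = N.charpoly) :
    sortedEigs M = sortedEigs N := by
  have hst := sorted_tuple_eq_of_multiset (eig_multiset_of_charpoly hM hN h)
  funext j
  rw [sortedEigs, sortedEigs, dif_pos hM, dif_pos hN]
  exact congrFun hst j.rev

theorem sortedEigs_mono {m : ℕ} {M N : Matrix (Fin m) (Fin m) ℝ}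
    (hM : M.IsHermitian) (hN : N.IsHermitian) (h : (N - M).PosSemidef) (i : Fin m) :
    sortedEigs M i ≤ sortedEigs N i := by
  rw [sortedEigs, sortedEigs, dif_pos hM, dif_pos hN]
  exact weyl_mono hM hN h i

theorem herm_conj {m : ℕ} {S C : Matrix (Fin m) (Fin m) ℝ}
    (hS : S.IsHermitian) (hC : C.IsHermitian) : (S * C * S).IsHermitian := by
  nth_rewrite 1 [← hS]
  exact isHermitian_conjTranspose_mul_mul S hC

theorem psd_conj {m : ℕ} {S P Q : Matrix (Fin m) (Fin m) ℝ}
    (hS : S.IsHermitian) (h : (Q - P).PosSemidef) :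
    (S * Q * S - S * P * S).PosSemidef := by
  have e : S * Q * S - S * P * S = S * (Q - P) * Sᴴ := by
    rw [hS]
    noncomm_ring
  rw [e]
  exact h.mul_mul_conjTranspose_same S

end AuxLemmas

/-- the extended symplectic eigenvalue map is monotone: `A ≤ B` (Loewner)
implies `λ_i(A^{1/2} Jᵀ A J A^{1/2}) ≤ λ_i(B^{1/2} Jᵀ B J B^{1/2})` for all `i`. -/
theorem extended_symplectic_eigenvalues_monotone
    (n : ℕ) (A B : Matrix (Fin (n + n)) (Fin (n + n)) ℝ)
    (hA : A.PosDef) (hB : B.PosDef) (hAB : (B - A).PosSemidef) :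
    ∀ i : Fin (n + n), sortedEigs (sympProd A) i ≤ sortedEigs (sympProd B) i := by
  intro i
  set CA := (Jmat n)ᵀ * A * Jmat n with hCA
  set CB := (Jmat n)ᵀ * B * Jmat n with hCB
  have hCApd : CA.PosDef := posDef_conj_J hA
  have hCBpd : CB.PosDef := posDef_conj_J hB
  have hsA : (pdSqrt A).IsHermitian := pdSqrt_hermitian hA.posSemidef
  have hsB : (pdSqrt B).IsHermitian := pdSqrt_hermitian hB.posSemidef
  have hsCB : (pdSqrt CB).IsHermitian := pdSqrt_hermitian hCBpd.posSemidef
  have hsymA : sympProd A = pdSqrt A * CA * pdSqrt A := by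
    simp only [sympProd, hCA, Matrix.mul_assoc]
  have hsymB : sympProd B = pdSqrt B * CB * pdSqrt B := by
    simp only [sympProd, hCB, Matrix.mul_assoc]
  -- Hermitian facts
  have hH1 : (pdSqrt A * CA * pdSqrt A).IsHermitian := herm_conj hsA hCApd.1
  have hH2 : (pdSqrt A * CB * pdSqrt A).IsHermitian := herm_conj hsA hCBpd.1
  have hH3 : (pdSqrt CB * A * pdSqrt CB).IsHermitian := herm_conj hsCB hA.1
  have hH4 : (pdSqrt CB * B * pdSqrt CB).IsHermitian := herm_conj hsCB hB.1
  have hH5 : (pdSqrt B * CB * pdSqrt B).IsHermitian := herm_conj hsB hCBpd.1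
  -- step 1 : Weyl monotonicity in the middle factor
  have hCBA : (CB - CA).PosSemidef := by
    have e : CB - CA = (Jmat n)ᴴ * (B - A) * Jmat n := by
      rw [Matrix.conjTranspose_eq_transpose_of_trivial, hCA, hCB]
      noncomm_ring
    rw [e]
    exact hAB.conjTranspose_mul_mul_same (Jmat n)
  have step1 : sortedEigs (pdSqrt A * CA * pdSqrt A) i ≤
      sortedEigs (pdSqrt A * CB * pdSqrt A) i :=
    sortedEigs_mono hH1 hH2 (psd_conj hsA hCBA) i
  -- step 2 : swap the roles of `A` and `CB` (equal charpoly)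
  have hdetCB : IsUnit CB.det := isUnit_iff_ne_zero.mpr (ne_of_gt hCBpd.det_pos)
  have e1 : (pdSqrt A * CB * pdSqrt A).charpoly = (CB * A).charpoly := by
    rw [Matrix.mul_assoc, charpoly_mul_comm' (pdSqrt A) (CB * pdSqrt A) (pdSqrt_det_isUnit hA),
      Matrix.mul_assoc, pdSqrt_mul_self hA.posSemidef]
  have e2 : (pdSqrt CB * A * pdSqrt CB).charpoly = (A * CB).charpoly := by
    rw [Matrix.mul_assoc, charpoly_mul_comm' (pdSqrt CB) (A * pdSqrt CB)
      (pdSqrt_det_isUnit hCBpd), Matrix.mul_assoc, pdSqrt_mul_self hCBpd.posSemidef]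
  have step2 : sortedEigs (pdSqrt A * CB * pdSqrt A) = sortedEigs (pdSqrt CB * A * pdSqrt CB) :=
    sortedEigs_eq_of_charpoly hH2 hH3
      (by rw [e1, e2, charpoly_mul_comm' CB A hdetCB])
  -- step 3 : Weyl monotonicity again
  have step3 : sortedEigs (pdSqrt CB * A * pdSqrt CB) i ≤
      sortedEigs (pdSqrt CB * B * pdSqrt CB) i :=
    sortedEigs_mono hH3 hH4 (psd_conj hsCB hAB) i
  -- step 4 : swap back
  have e3 : (pdSqrt CB * B * pdSqrt CB).charpoly = (B * CB).charpoly := by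
    rw [Matrix.mul_assoc, charpoly_mul_comm' (pdSqrt CB) (B * pdSqrt CB)
      (pdSqrt_det_isUnit hCBpd), Matrix.mul_assoc, pdSqrt_mul_self hCBpd.posSemidef]
  have e4 : (pdSqrt B * CB * pdSqrt B).charpoly = (CB * B).charpoly := by
    rw [Matrix.mul_assoc, charpoly_mul_comm' (pdSqrt B) (CB * pdSqrt B) (pdSqrt_det_isUnit hB),
      Matrix.mul_assoc, pdSqrt_mul_self hB.posSemidef]
  have step4 : sortedEigs (pdSqrt CB * B * pdSqrt CB) = sortedEigs (pdSqrt B * CB * pdSqrt B) :=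
    sortedEigs_eq_of_charpoly hH4 hH5
      (by rw [e3, e4, charpoly_mul_comm' B CB (isUnit_iff_ne_zero.mpr (ne_of_gt hB.det_pos))])
  calc sortedEigs (sympProd A) i
      = sortedEigs (pdSqrt A * CA * pdSqrt A) i := by rw [hsymA]
    _ ≤ sortedEigs (pdSqrt A * CB * pdSqrt A) i := step1
    _ = sortedEigs (pdSqrt CB * A * pdSqrt CB) i := by rw [step2]
    _ ≤ sortedEigs (pdSqrt CB * B * pdSqrt CB) i := step3
    _ = sortedEigs (pdSqrt B * CB * pdSqrt B) i := by rw [step4]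
    _ = sortedEigs (sympProd B) i := by rw [hsymB]
end
end
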